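/- Let ρ < 0, α ≥ 0, θ ∈ [π/2, π), and R > 0 with R ≤ sin(θ)·(1/(2|ρ|) + α). Then every complex number of the form z = α + s·e^{iφ} with s ≥ 0 and φ ∈ [−θ, θ] satisfies |z − 1/(2ρ)| ≥ R; that is, the shifted cone {α + s·e^{iφ} : s ≥ 0, |φ| ≤ θ} is disjoint from the open disk of center 1/(2ρ) and radius R. -/

import Mathlib

set_option maxHeartbeats 1000000


theorem stmt_7 (ρ α θ R : ℝ) (hρ : ρ < 0) (hα : α ≥ 0)
    (hθ : θ ∈ Set.Ico (Real.pi / 2) Real.pi) (hR : R > 0)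
    (hRle : R ≤ Real.sin θ * (1 / (2 * |ρ|) + α)) :
    ∀ s φ : ℝ, s ≥ 0 → |φ| ≤ θ →
      ‖(α : ℂ) + (s : ℂ) * Complex.exp ((φ : ℂ) * Complex.I)
          - ((1 / (2 * ρ) : ℝ) : ℂ)‖ ≥ R := by
  obtain ⟨hθ1, hθ2⟩ := hθ
  intro s φ hs hφ
  have h2ρ : 2 * ρ < 0 := by linarith
  have hc : (1 : ℝ) / (2 * ρ) < 0 := one_div_neg.mpr h2ρ
  obtain ⟨d, hdef⟩ : ∃ d : ℝ, d = α - 1 / (2 * ρ) := ⟨_, rfl⟩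
  have hd : 0 < d := by simp only [hdef]; linarith
  have habs : |ρ| = -ρ := abs_of_neg hρ
  have hRd : R ≤ Real.sin θ * d := by
    rw [habs] at hRle
    have : (1 : ℝ) / (2 * (-ρ)) = -(1 / (2 * ρ)) := by rw [mul_neg, div_neg]
    rw [this] at hRle
    have h2 : Real.sin θ * (-(1 / (2 * ρ)) + α) = Real.sin θ * d := by rw [hdef]; ring
    rw [h2] at hRle
    exact hRle
  have hsin : 0 ≤ Real.sin θ := Real.sin_nonneg_of_nonneg_of_le_pi
    (by linarith [Real.pi_pos]) hθ2.le
  have hcosθ : Real.cos θ ≤ 0 := Real.cos_nonpos_of_pi_div_two_le_of_le hθ1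
    (by linarith [Real.pi_pos])
  have hcos : Real.cos θ ≤ Real.cos φ := by
    have := Real.cos_le_cos_of_nonneg_of_le_pi (abs_nonneg φ) hθ2.le hφ
    rwa [Real.cos_abs] at this
  have key : (‖(α : ℂ) + (s : ℂ) * Complex.exp ((φ : ℂ) * Complex.I)
          - ((1 / (2 * ρ) : ℝ) : ℂ)‖)^2
      = (α + s * Real.cos φ - 1 / (2 * ρ))^2 + (s * Real.sin φ)^2 := by
    rw [Complex.sq_norm, Complex.normSq_apply]
    simp [Complex.exp_mul_I, Complex.cos_ofReal_re, Complex.sin_ofReal_re]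
    ring
  have pythφ := Real.sin_sq_add_cos_sq φ
  have pythθ := Real.sin_sq_add_cos_sq θ
  have A := norm_nonneg ((α : ℂ) + (s : ℂ) * Complex.exp ((φ : ℂ) * Complex.I)
          - ((1 / (2 * ρ) : ℝ) : ℂ))
  have hsq : R^2 ≤ (α + s * Real.cos φ - 1 / (2 * ρ))^2 + (s * Real.sin φ)^2 := by
    have hdd : α + s * Real.cos φ - 1 / (2 * ρ) = d + s * Real.cos φ := by
      simp [hdef]; ring
    rw [hdd]
    have expand : (d + s * Real.cos φ)^2 + (s * Real.sin φ)^2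
        = d^2 + 2*d*s*Real.cos φ + s^2 := by linear_combination s^2 * pythφ
    have hsq2 : R^2 ≤ (Real.sin θ * d)^2 := by
      nlinarith [mul_nonneg (sub_nonneg.mpr hRd) (by positivity : (0:ℝ) ≤ Real.sin θ * d + R)]
    have hsθ : (Real.sin θ * d)^2 = d^2 - (d * Real.cos θ)^2 := by
      linear_combination d^2 * pythθ
    nlinarith [sq_nonneg (s + d * Real.cos θ),
      mul_nonneg (mul_nonneg hs hd.le) (sub_nonneg.mpr hcos)]
  obtain ⟨A2, hA2⟩ : ∃ A2 : ℝ, A2 = ‖(α : ℂ) + (s : ℂ) * Complex.exp ((φ : ℂ) * Complex.I)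
          - ((1 / (2 * ρ) : ℝ) : ℂ)‖ := ⟨_, rfl⟩
  rw [← hA2] at key A ⊢
  have hA2sq : R^2 ≤ A2^2 := by rw [key]; exact hsq
  nlinarith [A, hR, hA2sq]
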